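/- For all a, b, c ∈ Γ: ⟨η̂(b,c), χ(a)⟩ = ⟨χ̂(a), η(b,c)⟩ · γ(b,c) · γ(ba,c)⁻¹ · γ(a,cb) · γ(a,b)⁻¹. Consequently, the two U(1)-valued 3-cocycles (a,b,c) ↦ ⟨χ̂(a), η(b,c)⟩ and (a,b,c) ↦ ⟨η̂(b,c), χ(a)⟩ on Γ (with trivial Γ-action on U(1)) differ by the coboundary of the 2-cochain γ, and hence are cohomologous in H³(Γ, U(1)). -/

import Mathlib

/-- With `η(a,b) := σ(χ(b)) − σ(χ(ba)) + σ(χ(a)) ∈ N`,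
`η̂(a,b) := σ̂(χ̂(b)) − σ̂(χ̂(ba)) + σ̂(χ̂(a)) ∈ N⊥` and
`γ(a,b) := ⟨σ̂(χ̂(a)), σ(χ(b))⟩ · ⟨η̂(a,b), χ(ba)⟩⁻¹`, one has, for all `a, b, c ∈ Γ`:
`⟨η̂(b,c), χ(a)⟩ = ⟨χ̂(a), η(b,c)⟩ · γ(b,c) · γ(ba,c)⁻¹ · γ(a,cb) · γ(a,b)⁻¹`.
Consequently the two `U(1)`-valued 3-cocycles `(a,b,c) ↦ ⟨χ̂(a), η(b,c)⟩` and
`(a,b,c) ↦ ⟨η̂(b,c), χ(a)⟩` differ by the coboundary of a 2-cochain, hence are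
cohomologous in `H³(Γ, U(1))`. -/
theorem statement6
    {Γ : Type*} [Group Γ] [Finite Γ]
    {G : Type*} [AddCommGroup G] [TopologicalSpace G] [IsTopologicalAddGroup G]
      [LocallyCompactSpace G] [SecondCountableTopology G] [T2Space G]
    (N : AddSubgroup G) [DiscreteTopology N] [CompactSpace (G ⧸ N)]
    -- the Pontryagin dual of `G`, abstracted by its pairing with `G`
    {Ghat : Type*} [AddCommGroup Ghat]
    (e : Ghat → G → Circle)
    (he₁ : ∀ (x y : Ghat) (g : G), e (x + y) g = e x g * e y g)
    (he₂ : ∀ (x : Ghat) (g h : G), e x (g + h) = e x g * e x h)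
    -- the annihilator `N⊥` of `N`
    (Nperp : AddSubgroup Ghat)
    (hNperp : ∀ x : Ghat, x ∈ Nperp ↔ ∀ n ∈ N, e x (n : G) = 1)
    -- the well-defined pairing of `Ĝ/N⊥` with `N`
    (eQN : Ghat ⧸ Nperp → N → Circle)
    (heQN : ∀ (x : Ghat) (n : N), eQN (x : Ghat ⧸ Nperp) n = e x (n : G))
    -- the well-defined pairing of `N⊥` with `G/N`
    (ePQ : Nperp → G ⧸ N → Circle)
    (hePQ : ∀ (p : Nperp) (g : G), ePQ p ((g : G) : G ⧸ N) = e (p : Ghat) g)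
    -- the homomorphisms `χ` and `χ̂`
    (χ : Γ → G ⧸ N) (hχ : ∀ a b : Γ, χ (a * b) = χ a + χ b)
    (χhat : Γ → Ghat ⧸ Nperp) (hχhat : ∀ a b : Γ, χhat (a * b) = χhat a + χhat b)
    -- set-theoretic sections `σ` and `σ̂` of the quotient maps
    (σ : G ⧸ N → G) (hσ : ∀ z : G ⧸ N, ((σ z : G) : G ⧸ N) = z)
    (σh : Ghat ⧸ Nperp → Ghat) (hσh : ∀ zh : Ghat ⧸ Nperp, ((σh zh : Ghat) : Ghat ⧸ Nperp) = zh)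
    -- `η(a,b) ∈ N` and `η̂(a,b) ∈ N⊥`
    (hη : ∀ a b : Γ, σ (χ b) - σ (χ (b * a)) + σ (χ a) ∈ N)
    (hηhat : ∀ a b : Γ, σh (χhat b) - σh (χhat (b * a)) + σh (χhat a) ∈ Nperp)
    (γ : Γ → Γ → Circle)
    (hγ : ∀ a b : Γ, γ a b = e (σh (χhat a)) (σ (χ b)) *
      (ePQ ⟨σh (χhat b) - σh (χhat (b * a)) + σh (χhat a), hηhat a b⟩ (χ (b * a)))⁻¹) :
    -- the main identity
    (∀ a b c : Γ,
      ePQ ⟨σh (χhat c) - σh (χhat (c * b)) + σh (χhat b), hηhat b c⟩ (χ a) =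
        eQN (χhat a) ⟨σ (χ c) - σ (χ (c * b)) + σ (χ b), hη b c⟩ *
          (γ b c * (γ (b * a) c)⁻¹ * γ a (c * b) * (γ a b)⁻¹)) ∧
    -- hence the two 3-cocycles differ by the coboundary of a 2-cochain (are cohomologous)
    (∃ γ' : Γ → Γ → Circle,
      ∀ a b c : Γ,
        ePQ ⟨σh (χhat c) - σh (χhat (c * b)) + σh (χhat b), hηhat b c⟩ (χ a) =
          eQN (χhat a) ⟨σ (χ c) - σ (χ (c * b)) + σ (χ b), hη b c⟩ *
            (γ' b c * (γ' (b * a) c)⁻¹ * γ' a (c * b) * (γ' a b)⁻¹)) := by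
  -- basic bilinearity consequences
  have he₂0 : ∀ x : Ghat, e x 0 = 1 := by
    intro x
    have h := he₂ x 0 0
    rw [add_zero] at h
    exact left_eq_mul.mp h
  have he₂neg : ∀ (x : Ghat) (g : G), e x (-g) = (e x g)⁻¹ := by
    intro x g
    have h := he₂ x g (-g)
    rw [add_neg_cancel, he₂0] at h
    exact eq_inv_of_mul_eq_one_right h.symm
  have he₂sub : ∀ (x : Ghat) (g h : G), e x (g - h) = e x g * (e x h)⁻¹ := by
    intro x g h
    rw [sub_eq_add_neg, he₂, he₂neg]
  have he₁0 : ∀ g : G, e 0 g = 1 := by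
    intro g
    have h := he₁ 0 0 g
    rw [add_zero] at h
    exact left_eq_mul.mp h
  have he₁neg : ∀ (x : Ghat) (g : G), e (-x) g = (e x g)⁻¹ := by
    intro x g
    have h := he₁ x (-x) g
    rw [add_neg_cancel, he₁0] at h
    exact eq_inv_of_mul_eq_one_right h.symm
  have he₁sub : ∀ (x y : Ghat) (g : G), e (x - y) g = e x g * (e y g)⁻¹ := by
    intro x y g
    rw [sub_eq_add_neg, he₁, he₁neg]
  have main : ∀ a b c : Γ,
      ePQ ⟨σh (χhat c) - σh (χhat (c * b)) + σh (χhat b), hηhat b c⟩ (χ a) =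
        eQN (χhat a) ⟨σ (χ c) - σ (χ (c * b)) + σ (χ b), hη b c⟩ *
          (γ b c * (γ (b * a) c)⁻¹ * γ a (c * b) * (γ a b)⁻¹) := by
    intro a b c
    have hePQ' : ∀ (x : Ghat) (hx : x ∈ Nperp) (g : Γ),
        ePQ ⟨x, hx⟩ (χ g) = e x (σ (χ g)) := by
      intro x hx g
      have h := hePQ ⟨x, hx⟩ (σ (χ g))
      rwa [hσ] at h
    have heQN' : ∀ (g : Γ) (n : G) (hn : n ∈ N),
        eQN (χhat g) ⟨n, hn⟩ = e (σh (χhat g)) n := by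
      intro g n hn
      have h := heQN (σh (χhat g)) ⟨n, hn⟩
      rwa [hσh] at h
    have h1 : e (σh (χhat c) - σh (χhat (c * b)) + σh (χhat b))
        (σ (χ (c * b)) - σ (χ (c * (b * a))) + σ (χ a)) = 1 := by
      have h := (hNperp _).mp (hηhat b c) _ (hη a (c * b))
      rwa [mul_assoc] at h
    have h2 : e (σh (χhat b) - σh (χhat (b * a)) + σh (χhat a))
        (σ (χ c) - σ (χ (c * (b * a))) + σ (χ (b * a))) = 1 :=
      (hNperp _).mp (hηhat a b) _ (hη (b * a) c)
    simp only [hγ, hePQ', heQN', mul_assoc] at *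
    simp only [he₁, he₂, he₁sub, he₂sub] at h1 h2 ⊢
    apply Additive.ofMul.injective
    replace h1 := congrArg Additive.ofMul h1
    replace h2 := congrArg Additive.ofMul h2
    simp only [ofMul_mul, ofMul_inv, ofMul_one] at h1 h2 ⊢
    rw [← sub_eq_zero, ← h1, ← sub_eq_zero]
    rw [← neg_eq_zero] at h2
    rw [← h2]
    abel
  exact ⟨main, γ, main⟩
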